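/- Let H and H′ be n×n real symmetric positive definite matrices, γ₁ > 0, and suppose H′ ≥ γ₁ H in the Loewner order. Let e, ν, θ ∈ ℝⁿ and define e⁺ = γ₁ (H′)⁻¹ H (e + ν + θ). Then e⁺ᵀ H′ e⁺ ≤ 3γ₁ (eᵀ H e + νᵀ H ν + θᵀ H θ). -/

import Mathlib

open Matrix

lemma form_symm {n : ℕ} (M : Matrix (Fin n) (Fin n) ℝ) (hM : Mᵀ = M)
    (x y : Fin n → ℝ) : x ⬝ᵥ M *ᵥ y = y ⬝ᵥ M *ᵥ x := by
  rw [dotProduct_mulVec, ← mulVec_transpose, hM, dotProduct_comm]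

lemma form_cs {n : ℕ} (M : Matrix (Fin n) (Fin n) ℝ) (hM : M.PosSemidef)
    (x y : Fin n → ℝ) :
    (x ⬝ᵥ M *ᵥ y) ^ 2 ≤ (x ⬝ᵥ M *ᵥ x) * (y ⬝ᵥ M *ᵥ y) := by
  have key : ∀ t : ℝ, 0 ≤ x ⬝ᵥ M *ᵥ x + 2 * t * (x ⬝ᵥ M *ᵥ y) + t^2 * (y ⬝ᵥ M *ᵥ y) := by
    intro t
    have h0 := hM.dotProduct_mulVec_nonneg (x + t • y)
    simp only [star_trivial] at h0
    have hexp : (x + t • y) ⬝ᵥ M *ᵥ (x + t • y)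
        = x ⬝ᵥ M *ᵥ x + 2 * t * (x ⬝ᵥ M *ᵥ y) + t^2 * (y ⬝ᵥ M *ᵥ y) := by
      rw [mulVec_add, dotProduct_add, add_dotProduct, add_dotProduct,
        mulVec_smul, dotProduct_smul, smul_dotProduct, smul_dotProduct]
      rw [form_symm M (by simpa using hM.isHermitian.eq) y x] at *
      simp [smul_eq_mul]
      ring
    rw [hexp] at h0
    exact_mod_cast h0
  set P := x ⬝ᵥ M *ᵥ x with hP
  set b := x ⬝ᵥ M *ᵥ y with hb'
  set a := y ⬝ᵥ M *ᵥ y with ha'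
  rcases le_or_gt a 0 with hy | hy
  · have hy0 : a = 0 := le_antisymm hy (by exact_mod_cast hM.dotProduct_mulVec_nonneg y)
    have hb : b = 0 := by
      by_contra hb
      have ht : 2 * (-(P + 1) / (2 * b)) * b = -(P + 1) := by field_simp
      have h1 := key (-(P + 1) / (2 * b))
      rw [hy0, ht] at h1
      linarith
    rw [hb, hy0]; simp
  · have ht : (-b / a) * a = -b := by field_simp
    have h1 := key (-b / a)
    nlinarith [mul_nonneg h1 hy.le, ht, sq_nonneg (-b/a)]

lemma form_two_mul_le {n : ℕ} (M : Matrix (Fin n) (Fin n) ℝ) (hM : M.PosSemidef)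
    (x y : Fin n → ℝ) :
    2 * (x ⬝ᵥ M *ᵥ y) ≤ x ⬝ᵥ M *ᵥ x + y ⬝ᵥ M *ᵥ y := by
  have h0 := hM.dotProduct_mulVec_nonneg (x - y)
  simp only [star_trivial] at h0
  have hs := form_symm M (by simpa using hM.isHermitian.eq) y x
  have hexp : (x - y) ⬝ᵥ M *ᵥ (x - y)
      = x ⬝ᵥ M *ᵥ x - 2 * (x ⬝ᵥ M *ᵥ y) + y ⬝ᵥ M *ᵥ y := by
    rw [mulVec_sub, dotProduct_sub, sub_dotProduct, sub_dotProduct, hs]; ring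
  rw [hexp] at h0
  have h0' : (0:ℝ) ≤ x ⬝ᵥ M *ᵥ x - 2 * (x ⬝ᵥ M *ᵥ y) + y ⬝ᵥ M *ᵥ y := by exact_mod_cast h0
  linarith

theorem lyapunov_decrement_impulsive (n : ℕ) (H H' : Matrix (Fin n) (Fin n) ℝ)
    (hH : H.PosDef) (hH' : H'.PosDef) (γ₁ : ℝ) (hγ₁ : 0 < γ₁)
    (hLoewner : (H' - γ₁ • H).PosSemidef)
    (e ν θ : Fin n → ℝ) (eplus : Fin n → ℝ)
    (heplus : eplus = γ₁ • ((H')⁻¹ * H) *ᵥ (e + ν + θ)) :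
    eplus ⬝ᵥ H' *ᵥ eplus ≤ 3 * γ₁ * (e ⬝ᵥ H *ᵥ e + ν ⬝ᵥ H *ᵥ ν + θ ⬝ᵥ H *ᵥ θ) := by
  set y : Fin n → ℝ := e + ν + θ with hy
  set z : Fin n → ℝ := (H')⁻¹ *ᵥ (H *ᵥ y) with hz
  have hinv : H' * (H')⁻¹ = 1 :=
    Matrix.mul_nonsing_inv _ (isUnit_iff_ne_zero.mpr hH'.det_pos.ne')
  have hH'z : H' *ᵥ z = H *ᵥ y := by
    rw [hz, mulVec_mulVec, hinv, one_mulVec]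
  have heq : eplus = γ₁ • z := by
    rw [heplus, hz, mulVec_mulVec]
  -- quantities
  set P := z ⬝ᵥ H *ᵥ z with hPd
  set s := z ⬝ᵥ H *ᵥ y with hsd
  set q := y ⬝ᵥ H *ᵥ y with hqd
  have hPSD := hH.posSemidef
  have hLHS : eplus ⬝ᵥ H' *ᵥ eplus = γ₁ ^ 2 * s := by
    rw [heq, mulVec_smul, dotProduct_smul, smul_dotProduct, hH'z, smul_eq_mul,
      smul_eq_mul]
    ring
  have hLo : γ₁ * P ≤ s := by
    have h0 := hLoewner.dotProduct_mulVec_nonneg z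
    simp only [star_trivial] at h0
    have hexp : z ⬝ᵥ (H' - γ₁ • H) *ᵥ z = s - γ₁ * P := by
      rw [sub_mulVec, dotProduct_sub, smul_mulVec, dotProduct_smul,
        smul_eq_mul, hH'z]
    rw [hexp] at h0
    have : (0:ℝ) ≤ s - γ₁ * P := by exact_mod_cast h0
    linarith
  have hCS : s ^ 2 ≤ P * q := form_cs H hPSD z y
  have hP0 : (0:ℝ) ≤ P := by exact_mod_cast hPSD.dotProduct_mulVec_nonneg z
  have hq0 : (0:ℝ) ≤ q := by exact_mod_cast hPSD.dotProduct_mulVec_nonneg y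
  -- q ≤ 3 * (sum of three quadratic forms)
  have hsumexp : q = e ⬝ᵥ H *ᵥ e + ν ⬝ᵥ H *ᵥ ν + θ ⬝ᵥ H *ᵥ θ
      + 2 * (e ⬝ᵥ H *ᵥ ν) + 2 * (e ⬝ᵥ H *ᵥ θ) + 2 * (ν ⬝ᵥ H *ᵥ θ) := by
    have hsym : Hᵀ = H := by simpa using hPSD.isHermitian.eq
    rw [hqd, hy]
    rw [mulVec_add, mulVec_add, dotProduct_add, dotProduct_add,
      add_dotProduct, add_dotProduct, add_dotProduct, add_dotProduct,
      add_dotProduct, add_dotProduct,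
      form_symm H hsym ν e, form_symm H hsym θ e, form_symm H hsym θ ν]
    ring
  have h12 := form_two_mul_le H hPSD e ν
  have h13 := form_two_mul_le H hPSD e θ
  have h23 := form_two_mul_le H hPSD ν θ
  have hq3 : q ≤ 3 * (e ⬝ᵥ H *ᵥ e + ν ⬝ᵥ H *ᵥ ν + θ ⬝ᵥ H *ᵥ θ) := by
    rw [hsumexp]; linarith
  rw [hLHS]
  rcases le_or_gt s 0 with hs | hs
  · nlinarith [sq_nonneg γ₁]
  · have hsq : γ₁ * s ≤ q := by nlinarith
    nlinarith
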